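/- Let ψ(M) = (1/(rε)) · ln((p2 + √(1+p2²))/(p1 + √(1+p1²))) with ε = d/r > 0, |θ| < π/2, p1 = (−Mε/2 − sin θ)/cos θ, p2 = (Mε/2 − sin θ)/cos θ. Then lim_{M → ∞} ψ(M)²/M = 0 and lim_{M → ∞} ψ(M) = ∞; in fact ψ(M) grows like (2/(d)) ln(M) as M → ∞ (i.e., ψ(M)/ln M → 2/d). -/

import Mathlib

open Real Filter

lemma aux_sqrt_pos (x : ℝ) : 0 < x + Real.sqrt (1 + x ^ 2) := by
  have h : |x| < Real.sqrt (1 + x ^ 2) := by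
    rw [show |x| = Real.sqrt (x ^ 2) by rw [Real.sqrt_sq_eq_abs]]
    exact Real.sqrt_lt_sqrt (by positivity) (by linarith)
  have := neg_abs_le x
  linarith

lemma aux_g (a b : ℝ) (ha : 0 < a) :
    Tendsto (fun M : ℝ => (a * M + b + Real.sqrt (1 + (a * M + b) ^ 2)) / M)
      atTop (nhds (2 * a)) := by
  have h1 : Tendsto (fun M : ℝ => M⁻¹) atTop (nhds 0) := tendsto_inv_atTop_zero
  have hc : Continuous (fun t : ℝ => (a + b * t) + Real.sqrt (t ^ 2 + (a + b * t) ^ 2)) := by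
    continuity
  have h2 := (hc.tendsto 0).comp h1
  have hval : (a + b * 0) + Real.sqrt (0 ^ 2 + (a + b * 0) ^ 2) = 2 * a := by
    rw [show (0:ℝ) ^ 2 + (a + b * 0) ^ 2 = a ^ 2 by ring, Real.sqrt_sq ha.le]; ring
  rw [hval] at h2
  apply h2.congr'
  filter_upwards [eventually_gt_atTop (0:ℝ)] with M hM
  have hM' : M ≠ 0 := hM.ne'
  have hsq : Real.sqrt (1 + (a * M + b) ^ 2) / M
      = Real.sqrt ((M⁻¹) ^ 2 + (a + b * M⁻¹) ^ 2) := by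
    rw [show (M⁻¹) ^ 2 + (a + b * M⁻¹) ^ 2 = (1 + (a * M + b) ^ 2) / M ^ 2 by
          field_simp,
        Real.sqrt_div (by positivity), Real.sqrt_sq hM.le]
  rw [Function.comp_apply]
  rw [← hsq]
  field_simp

lemma aux_arsinh (a b : ℝ) (ha : 0 < a) :
    Tendsto (fun M : ℝ => Real.arsinh (a * M + b) - Real.log M) atTop
      (nhds (Real.log (2 * a))) := by
  have hg := aux_g a b ha
  have hlog := (Real.continuousAt_log (by positivity : (2 * a) ≠ 0)).tendsto.comp hg
  apply hlog.congr'
  filter_upwards [eventually_gt_atTop (0:ℝ)] with M hM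
  rw [Function.comp_apply, Real.log_div (aux_sqrt_pos _).ne' hM.ne', Real.arsinh]

lemma aux_ratio (a b : ℝ) (ha : 0 < a) :
    Tendsto (fun M : ℝ => Real.arsinh (a * M + b) / Real.log M) atTop (nhds 1) := by
  have h0 := aux_arsinh a b ha
  have h1 : Tendsto (fun M : ℝ => (Real.arsinh (a * M + b) - Real.log M) / Real.log M)
      atTop (nhds 0) := h0.div_atTop Real.tendsto_log_atTop
  have h2 := h1.add tendsto_const_nhds (f := fun M : ℝ => (Real.arsinh (a * M + b) - Real.log M) / Real.log M) (b := (1:ℝ))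
  rw [zero_add] at h2
  apply h2.congr'
  filter_upwards [eventually_gt_atTop (1:ℝ)] with M hM
  have hL : Real.log M ≠ 0 := (Real.log_pos hM).ne'
  field_simp
  ring

theorem stmt_11 (r d θ : ℝ) (hr : 0 < r) (hd : 0 < d) (hθ : |θ| < π / 2)
    (ε : ℝ) (hε : ε = d / r)
    (ψ : ℝ → ℝ)
    (hψ : ψ = fun M : ℝ =>
      (1 / (r * ε)) *
        Real.log ((((M * ε / 2 - Real.sin θ) / Real.cos θ) +
            Real.sqrt (1 + ((M * ε / 2 - Real.sin θ) / Real.cos θ) ^ 2)) /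
          (((-(M * ε / 2) - Real.sin θ) / Real.cos θ) +
            Real.sqrt (1 + ((-(M * ε / 2) - Real.sin θ) / Real.cos θ) ^ 2)))) :
    Tendsto (fun M : ℝ => ψ M ^ 2 / M) atTop (nhds 0) ∧
    Tendsto ψ atTop atTop ∧
    Tendsto (fun M : ℝ => ψ M / Real.log M) atTop (nhds (2 / d)) := by
  have hc : 0 < Real.cos θ := Real.cos_pos_of_mem_Ioo (abs_lt.mp hθ |> fun h => ⟨h.1, h.2⟩)
  have hεpos : 0 < ε := by rw [hε]; positivity
  have hrε : r * ε = d := by rw [hε]; field_simp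
  set a : ℝ := ε / (2 * Real.cos θ) with ha_def
  have ha : 0 < a := by positivity
  set b1 : ℝ := -Real.sin θ / Real.cos θ
  set b2 : ℝ := Real.sin θ / Real.cos θ
  -- key pointwise identity
  have hψeq : ∀ M : ℝ, ψ M =
      (Real.arsinh (a * M + b1) + Real.arsinh (a * M + b2)) / d := by
    intro M
    rw [hψ]
    simp only
    have e2 : (M * ε / 2 - Real.sin θ) / Real.cos θ = a * M + b1 := by
      field_simp [ha_def, b1]; rw [ha_def, show b1 = -Real.sin θ / Real.cos θ from rfl]; field_simp; ring
    have e1 : (-(M * ε / 2) - Real.sin θ) / Real.cos θ = -(a * M + b2) := by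
      field_simp [ha_def, b2]; rw [ha_def, show b2 = Real.sin θ / Real.cos θ from rfl]; field_simp; ring
    rw [e1, e2, hrε,
      Real.log_div (aux_sqrt_pos _).ne' (aux_sqrt_pos _).ne',
      show Real.log (a * M + b1 + Real.sqrt (1 + (a * M + b1) ^ 2))
          = Real.arsinh (a * M + b1) from rfl,
      show Real.log (-(a * M + b2) + Real.sqrt (1 + (-(a * M + b2)) ^ 2))
          = Real.arsinh (-(a * M + b2)) from rfl,
      Real.arsinh_neg]
    ring
  -- part 3
  have h3 : Tendsto (fun M : ℝ => ψ M / Real.log M) atTop (nhds (2 / d)) := by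
    have h := ((aux_ratio a b1 ha).add (aux_ratio a b2 ha)).const_mul (1 / d)
    have hlim : 1 / d * (1 + 1) = 2 / d := by ring
    rw [hlim] at h
    apply h.congr
    intro M
    rw [hψeq M]
    ring
  refine ⟨?_, ?_, h3⟩
  -- part 1
  · have hlg : Tendsto (fun M : ℝ => Real.log M ^ 2 / M) atTop (nhds 0) := by
      simpa using Real.tendsto_pow_log_div_mul_add_atTop 1 0 2 one_ne_zero
    have h := ((h3.mul h3)).mul hlg
    rw [mul_zero] at h
    apply h.congr'
    filter_upwards [eventually_gt_atTop (1:ℝ)] with M hM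
    have hL : Real.log M ≠ 0 := (Real.log_pos hM).ne'
    field_simp
  -- part 2
  · have h := Tendsto.pos_mul_atTop (by positivity : (0:ℝ) < 2 / d) h3 Real.tendsto_log_atTop
    apply h.congr'
    filter_upwards [eventually_gt_atTop (1:ℝ)] with M hM
    have hL : Real.log M ≠ 0 := (Real.log_pos hM).ne'
    field_simp
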